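/- Let β > 0, let θ̄_prev > δ ≥ 0 with θ̄_prev - δ > 0, and let θ̄_a > 0 with θ̄_a ≥ θ̄_prev - δ. If an error satisfies e(τ_a + Δ) ≤ e(τ_a) · exp(-β Δ) and e(τ_a) ≤ θ̄_a, then the dwell time condition Δ ≥ -(1/β) · ln((θ̄_prev - δ)/θ̄_a) implies e(τ_a + Δ) ≤ θ̄_prev - δ. -/
import Mathlib


theorem stmt_2 (β δ θprev θa τa Δ : ℝ) (e : ℝ → ℝ)
    (hβ : 0 < β) (hδ : 0 ≤ δ) (hprev : δ < θprev) (hprevδ : 0 < θprev - δ)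
    (hθa : 0 < θa) (hge : θprev - δ ≤ θa)
    (hdecay : e (τa + Δ) ≤ e τa * Real.exp (-β * Δ))
    (hinit : e τa ≤ θa)
    (hdwell : Δ ≥ -(1 / β) * Real.log ((θprev - δ) / θa)) :
    e (τa + Δ) ≤ θprev - δ := by
  have hlog : -β * Δ ≤ Real.log ((θprev - δ) / θa) := by
    have h := mul_le_mul_of_nonneg_left hdwell (le_of_lt hβ)
    rw [neg_mul, mul_neg, ← mul_assoc, mul_one_div_cancel hβ.ne', one_mul] at h
    linarith
  have hexp : Real.exp (-β * Δ) ≤ (θprev - δ) / θa := by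
    calc Real.exp (-β * Δ) ≤ Real.exp (Real.log ((θprev - δ) / θa)) :=
          Real.exp_le_exp.mpr hlog
      _ = (θprev - δ) / θa := Real.exp_log (div_pos hprevδ hθa)
  calc e (τa + Δ) ≤ e τa * Real.exp (-β * Δ) := hdecay
    _ ≤ θa * ((θprev - δ) / θa) := by
        apply mul_le_mul hinit hexp (Real.exp_pos _).le hθa.le
    _ = θprev - δ := by field_simp
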